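/- arXiv:2203.10434 — 3 statements merged into one kernel-verified Lean document; each statement's English description precedes it below -/
import Mathlib

section
/- Let n, τ, U be as in the context and let γ : I → U be a geodesic curve, i.e. γ'(s) = ∇τ(γ(s))/n(γ(s))² for all s ∈ I. Then for every s ∈ I the derivative of the function s ↦ Δτ(γ(s)) satisfies d/ds [Δτ(γ(s))] ≤ 6·n₀₀². (Lemma 3.1.) -/
open Real Set

/-- The partial derivative `∂_{x_i} f` of `f : ℝ³ → ℝ`. -/
noncomputable def pd (i : Fin 3) (f : (Fin 3 → ℝ) → ℝ) (x : Fin 3 → ℝ) : ℝ :=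
  fderiv ℝ f x (Pi.single i 1)

/-- The Laplacian `Δ f = Σᵢ ∂_{x_i}² f`. -/
noncomputable def lap (f : (Fin 3 → ℝ) → ℝ) (x : Fin 3 → ℝ) : ℝ :=
  ∑ i : Fin 3, pd i (pd i f) x

lemma pd_congr {f g : (Fin 3 → ℝ) → ℝ} {U : Set (Fin 3 → ℝ)} (hU : IsOpen U)
    (hfg : ∀ y ∈ U, f y = g y) {x : Fin 3 → ℝ} (hx : x ∈ U) (i : Fin 3) :
    pd i f x = pd i g x := by
  unfold pd
  rw [Filter.EventuallyEq.fderiv_eq (Filter.eventually_of_mem (hU.mem_nhds hx) hfg)]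

lemma pd_mul {f g : (Fin 3 → ℝ) → ℝ} {x : Fin 3 → ℝ} (hf : DifferentiableAt ℝ f x)
    (hg : DifferentiableAt ℝ g x) (i : Fin 3) :
    pd i (fun y => f y * g y) x = pd i f x * g x + f x * pd i g x := by
  unfold pd
  change (fderiv ℝ (f * g) x) (Pi.single i 1) = _
  rw [(hf.hasFDerivAt.mul hg.hasFDerivAt).fderiv]
  simp [mul_comm]
  ring

lemma pd_sum {f : Fin 3 → (Fin 3 → ℝ) → ℝ} {x : Fin 3 → ℝ}
    (hf : ∀ k, DifferentiableAt ℝ (f k) x) (i : Fin 3) :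
    pd i (fun y => ∑ k, f k y) x = ∑ k, pd i (f k) x := by
  unfold pd
  rw [fderiv_fun_sum (fun k _ => hf k)]
  simp

lemma pd_sq {f : (Fin 3 → ℝ) → ℝ} {x : Fin 3 → ℝ} (hf : DifferentiableAt ℝ f x) (i : Fin 3) :
    pd i (fun y => f y ^ 2) x = 2 * f x * pd i f x := by
  have : (fun y => f y ^ 2) = fun y => f y * f y := by funext y; ring
  rw [this, pd_mul hf hf]; ring

lemma pd_comm {f : (Fin 3 → ℝ) → ℝ} {x : Fin 3 → ℝ} (hf : ContDiffAt ℝ 2 f x) (i j : Fin 3) :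
    pd i (pd j f) x = pd j (pd i f) x := by
  have hdf : DifferentiableAt ℝ (fderiv ℝ f) x :=
    (hf.fderiv_right (m := 1) (by norm_num)).differentiableAt one_ne_zero
  have hsym := hf.isSymmSndFDerivAt (by simp)
  have key : ∀ a b : Fin 3, pd a (pd b f) x
      = fderiv ℝ (fderiv ℝ f) x (Pi.single a 1) (Pi.single b 1) := by
    intro a b
    show fderiv ℝ (fun y => (fderiv ℝ f y) (Pi.single b 1)) x (Pi.single a 1) = _
    rw [fderiv_clm_apply hdf (differentiableAt_const _)]
    simp
  rw [key, key, hsym]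

lemma hasDerivAt_comp3 {f : (Fin 3 → ℝ) → ℝ} {γ : ℝ → Fin 3 → ℝ} {s : ℝ} {v : Fin 3 → ℝ}
    (hf : DifferentiableAt ℝ f (γ s)) (hγ : HasDerivAt γ v s) :
    HasDerivAt (fun u => f (γ u)) (∑ i, v i * pd i f (γ s)) s := by
  have h := hf.hasFDerivAt.comp_hasDerivAt s hγ
  refine h.congr_deriv ?_
  have := (fderiv ℝ f (γ s) : (Fin 3 → ℝ) →ₗ[ℝ] ℝ).pi_apply_eq_sum_univ v
  simp only [ContinuousLinearMap.coe_coe] at this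
  rw [this]
  refine Finset.sum_congr rfl fun i _ => ?_
  have : (fun j => if i = j then (1:ℝ) else 0) = Pi.single i 1 := by
    funext j; simp [Pi.single_apply, eq_comm]
  rw [this]
  simp [pd, mul_comm]

theorem stmt0
    (n₀ n₀₀ : ℝ) (hn₀ : 1 < n₀) (hn₀n₀₀ : n₀ < n₀₀)
    (n : (Fin 3 → ℝ) → ℝ) (hn : ContDiff ℝ 2 n)
    (hn1 : ∀ x, 1 ≤ n x) (hn2 : ∀ x, n x ≤ n₀)
    (hb0 : ∀ x, |n x| ≤ n₀₀)
    (hb1 : ∀ x, ∀ i : Fin 3, |pd i n x| ≤ n₀₀)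
    (hb2 : ∀ x, ∀ i j : Fin 3, |pd i (pd j n) x| ≤ n₀₀)
    (U : Set (Fin 3 → ℝ)) (hU : IsOpen U)
    (τ : (Fin 3 → ℝ) → ℝ) (hτ : ContDiffOn ℝ 3 τ U)
    (heik : ∀ x ∈ U, ∑ i : Fin 3, (pd i τ x) ^ 2 = (n x) ^ 2)
    (I : Set ℝ) (γ : ℝ → (Fin 3 → ℝ))
    (hγU : ∀ s ∈ I, γ s ∈ U)
    (hgeo : ∀ s ∈ I, HasDerivAt γ (fun i => pd i τ (γ s) / (n (γ s)) ^ 2) s) :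
    ∀ s ∈ I, ∀ d : ℝ, HasDerivAt (fun u => lap τ (γ u)) d s → d ≤ 6 * n₀₀ ^ 2 := by
  -- regularity of τ's derivatives on U
  have hτ1 : ∀ i, ContDiffOn ℝ 2 (pd i τ) U := by
    intro i
    exact (hτ.fderiv_of_isOpen hU (by norm_num)).clm_apply contDiffOn_const
  have hτ2 : ∀ i j, ContDiffOn ℝ 1 (pd j (pd i τ)) U := by
    intro i j
    exact ((hτ1 i).fderiv_of_isOpen hU (by norm_num)).clm_apply contDiffOn_const
  have hdτ1 : ∀ i, ∀ y ∈ U, DifferentiableAt ℝ (pd i τ) y := fun i y hy =>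
    ((hτ1 i).contDiffAt (hU.mem_nhds hy)).differentiableAt two_ne_zero
  have hdτ2 : ∀ i j, ∀ y ∈ U, DifferentiableAt ℝ (pd j (pd i τ)) y := fun i j y hy =>
    ((hτ2 i j).contDiffAt (hU.mem_nhds hy)).differentiableAt one_ne_zero
  -- regularity of n
  have hnd : ∀ y, DifferentiableAt ℝ n y := fun y => hn.differentiable two_ne_zero y
  have hn1' : ∀ i, ContDiff ℝ 1 (pd i n) := fun i =>
    (hn.fderiv_right (m := 1) (by norm_num)).clm_apply contDiff_const
  have hnd1 : ∀ i y, DifferentiableAt ℝ (pd i n) y := fun i y =>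
    (hn1' i).differentiable one_ne_zero y
  -- step 1 : differentiated eikonal equation, valid on all of U
  have E1 : ∀ y ∈ U, ∀ j : Fin 3,
      ∑ i : Fin 3, pd i τ y * pd j (pd i τ) y = n y * pd j n y := by
    intro y hy j
    have h0 : pd j (fun z => ∑ i : Fin 3, (pd i τ z) ^ 2) y
        = pd j (fun z => (n z) ^ 2) y := pd_congr hU heik hy j
    rw [pd_sum (f := fun k z => pd k τ z ^ 2) (fun k => ((hdτ1 k y hy).pow 2)) j, pd_sq (hnd y) j] at h0
    have h1 : ∀ k ∈ Finset.univ, pd j (fun z => pd k τ z ^ 2) y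
        = 2 * (pd k τ y * pd j (pd k τ) y) := by
      intro k _
      rw [show (fun z => pd k τ z ^ 2) = fun z => (pd k τ) z ^ 2 from rfl,
        pd_sq (hdτ1 k y hy) j]; ring
    rw [Finset.sum_congr rfl h1, ← Finset.mul_sum] at h0
    linarith
  intro s hs d hd
  set x := γ s with hxdef
  have hxU : x ∈ U := hγU s hs
  -- step 2 : differentiate E1 once more, at x
  have E2 : ∀ j : Fin 3,
      ∑ i : Fin 3, (pd j (pd i τ) x * pd j (pd i τ) x
        + pd i τ x * pd j (pd j (pd i τ)) x)
      = pd j n x * pd j n x + n x * pd j (pd j n) x := by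
    intro j
    have h0 : pd j (fun y => ∑ i : Fin 3, pd i τ y * pd j (pd i τ) y) x
        = pd j (fun y => n y * pd j n y) x :=
      pd_congr hU (fun y hy => E1 y hy j) hxU j
    rw [pd_sum (f := fun k y => pd k τ y * pd j (pd k τ) y) (fun k => (hdτ1 k x hxU).mul (hdτ2 k j x hxU)) j,
      pd_mul (hnd x) (hnd1 j x) j] at h0
    have h1 : ∀ k ∈ Finset.univ, pd j (fun y => pd k τ y * pd j (pd k τ) y) x
        = pd j (pd k τ) x * pd j (pd k τ) x + pd k τ x * pd j (pd j (pd k τ)) x := by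
      intro k _
      rw [pd_mul (hdτ1 k x hxU) (hdτ2 k j x hxU) j]
    rw [Finset.sum_congr rfl h1] at h0
    exact h0
  -- step 3 : symmetry of derivatives
  have SYM : ∀ i j : Fin 3, pd j (pd j (pd i τ)) x = pd i (pd j (pd j τ)) x := by
    intro i j
    have h1 : pd j (pd j (pd i τ)) x = pd j (pd i (pd j τ)) x := by
      refine pd_congr hU (fun y hy => ?_) hxU j
      exact pd_comm ((hτ.contDiffAt (hU.mem_nhds hy)).of_le (by norm_num)) j i
    have h2 : pd j (pd i (pd j τ)) x = pd i (pd j (pd j τ)) x :=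
      pd_comm ((hτ1 j).contDiffAt (hU.mem_nhds hxU)) j i
    rw [h1, h2]
  -- derivative of the Laplacian in direction i
  have hlapeq : lap τ = fun y => ∑ j : Fin 3, pd j (pd j τ) y := rfl
  have LAPD : ∀ i : Fin 3, pd i (lap τ) x = ∑ j : Fin 3, pd i (pd j (pd j τ)) x := by
    intro i
    rw [hlapeq, pd_sum (fun k => hdτ2 k k x hxU) i]
  -- lap τ is C¹ on U, hence differentiable at x
  have hlapC : ContDiffOn ℝ 1 (lap τ) U := by
    rw [hlapeq]
    exact ContDiffOn.sum (fun j _ => hτ2 j j)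
  have hlapd : DifferentiableAt ℝ (lap τ) x :=
    (hlapC.contDiffAt (hU.mem_nhds hxU)).differentiableAt one_ne_zero
  -- chain rule : identify d
  have hchain := hasDerivAt_comp3 hlapd (hgeo s hs)
  have hdval : d = ∑ i : Fin 3, (pd i τ x / n x ^ 2) * pd i (lap τ) x :=
    hd.unique hchain
  -- the key quantity
  set S : ℝ := ∑ i : Fin 3, pd i τ x * pd i (lap τ) x with hSdef
  have hSval : S = ∑ j : Fin 3, (pd j n x * pd j n x + n x * pd j (pd j n) x)
      - ∑ j : Fin 3, ∑ i : Fin 3, pd j (pd i τ) x * pd j (pd i τ) x := by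
    have h1 : S = ∑ i : Fin 3, ∑ j : Fin 3, pd i τ x * pd i (pd j (pd j τ)) x := by
      rw [hSdef]
      refine Finset.sum_congr rfl fun i _ => ?_
      rw [LAPD i, Finset.mul_sum]
    rw [h1, Finset.sum_comm]
    have h2 : ∀ j ∈ Finset.univ, (∑ i : Fin 3, pd i τ x * pd i (pd j (pd j τ)) x)
        = (pd j n x * pd j n x + n x * pd j (pd j n) x)
          - ∑ i : Fin 3, pd j (pd i τ) x * pd j (pd i τ) x := by
      intro j _
      have := E2 j
      rw [Finset.sum_add_distrib] at this
      have h3 : ∑ i : Fin 3, pd i τ x * pd i (pd j (pd j τ)) x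
          = ∑ i : Fin 3, pd i τ x * pd j (pd j (pd i τ)) x := by
        refine Finset.sum_congr rfl fun i _ => ?_
        rw [SYM i j]
      rw [h3]
      linarith
    rw [Finset.sum_congr rfl h2, Finset.sum_sub_distrib]
  -- bounds
  have hQ : 0 ≤ ∑ j : Fin 3, ∑ i : Fin 3, pd j (pd i τ) x * pd j (pd i τ) x :=
    Finset.sum_nonneg fun j _ => Finset.sum_nonneg fun i _ => mul_self_nonneg _
  have hn₀₀pos : (0:ℝ) < n₀₀ := by linarith
  have hB : ∑ j : Fin 3, (pd j n x * pd j n x + n x * pd j (pd j n) x) ≤ 6 * n₀₀ ^ 2 := by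
    have hterm : ∀ j : Fin 3, pd j n x * pd j n x + n x * pd j (pd j n) x
        ≤ 2 * n₀₀ ^ 2 := by
      intro j
      have h1 : pd j n x * pd j n x ≤ n₀₀ ^ 2 := by
        have := hb1 x j
        nlinarith [abs_nonneg (pd j n x), neg_abs_le (pd j n x), le_abs_self (pd j n x)]
      have h2 : n x * pd j (pd j n) x ≤ n₀₀ ^ 2 := by
        have ha := hb0 x
        have hc := hb2 x j j
        calc n x * pd j (pd j n) x ≤ |n x * pd j (pd j n) x| := le_abs_self _
          _ = |n x| * |pd j (pd j n) x| := abs_mul _ _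
          _ ≤ n₀₀ * n₀₀ := by
              exact mul_le_mul ha hc (abs_nonneg _) (le_of_lt hn₀₀pos)
          _ = n₀₀ ^ 2 := by ring
      linarith
    calc ∑ j : Fin 3, (pd j n x * pd j n x + n x * pd j (pd j n) x)
        ≤ ∑ _j : Fin 3, 2 * n₀₀ ^ 2 := Finset.sum_le_sum fun j _ => hterm j
      _ = 6 * n₀₀ ^ 2 := by simp; ring
  have hS : S ≤ 6 * n₀₀ ^ 2 := by rw [hSval]; linarith
  -- conclude
  have hnx : 1 ≤ n x := hn1 x
  have hnsq : (1:ℝ) ≤ n x ^ 2 := by nlinarith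
  have hnsqpos : (0:ℝ) < n x ^ 2 := by linarith
  have hdS : d = S / n x ^ 2 := by
    rw [hdval, hSdef, Finset.sum_div]
    refine Finset.sum_congr rfl fun i _ => ?_
    field_simp
  rw [hdS, div_le_iff₀ hnsqpos]
  nlinarith
end

section
/- Let n be C² and strictly positive on an open set U ⊆ ℝ³, let τ be C³ on U with |∇τ(x)|² = n(x)² on U, and let γ : I → U satisfy γ'(s) = ∇τ(γ(s))/n(γ(s))². Then along γ the identity d/ds [Δτ(γ(s))] + n(γ(s))⁻² · Σ_{i,j=1}^{3} (∂_{x_i}∂_{x_j}τ(γ(s)))² = n⁻²|∇n|²(γ(s)) + n⁻¹Δn(γ(s)) holds for every s ∈ I. (Identity (7.1) in the proof of Lemma 3.1.) -/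
/- STATEMENT 1 (identity (7.1) in the proof of Lemma 3.1):
   d/ds [Δτ(γ(s))] + n⁻² Σ_{i,j} (∂_i∂_j τ)² = n⁻²|∇n|² + n⁻¹Δn along a geodesic. -/

open Real Set

lemma pd_contDiffOn {m k : WithTop ℕ∞} {f : (Fin 3 → ℝ) → ℝ} {U : Set (Fin 3 → ℝ)}
    (hU : IsOpen U) (hf : ContDiffOn ℝ k f U) (h : m + 1 ≤ k) (i : Fin 3) :
    ContDiffOn ℝ m (pd i f) U := by
  have e : pd i f = fun x => (fderiv ℝ f x) (Pi.single i 1) := rfl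
  rw [e]
  exact (hf.fderiv_of_isOpen hU h).clm_apply contDiffOn_const

lemma clm_apply_eq_sum (L : (Fin 3 → ℝ) →L[ℝ] ℝ) (v : Fin 3 → ℝ) :
    L v = ∑ j, v j * L (Pi.single j 1) := by
  conv_lhs => rw [← Finset.univ_sum_single v]
  rw [map_sum]
  refine Finset.sum_congr rfl fun j _ => ?_
  have e : Pi.single j (v j) = (v j) • (Pi.single j 1 : Fin 3 → ℝ) := by
    rw [← Pi.single_smul, smul_eq_mul, mul_one]
  rw [e, map_smul, smul_eq_mul]

lemma pd_symm {U : Set (Fin 3 → ℝ)} (hU : IsOpen U) {g : (Fin 3 → ℝ) → ℝ}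
    (hg : ContDiffOn ℝ 2 g U) {x : Fin 3 → ℝ} (hx : x ∈ U) (a b : Fin 3) :
    pd a (pd b g) x = pd b (pd a g) x := by
  have hnb := hU.mem_nhds hx
  have hca : ContDiffAt ℝ 2 g x := hg.contDiffAt hnb
  have hd : DifferentiableAt ℝ (fderiv ℝ g) x :=
    ((hg.fderiv_of_isOpen hU (m := 1) (by norm_num)).contDiffAt hnb).differentiableAt one_ne_zero
  have key : ∀ v w, fderiv ℝ (fun y => fderiv ℝ g y v) x w = (fderiv ℝ (fderiv ℝ g) x) w v := by
    intro v w
    rw [fderiv_clm_apply hd (differentiableAt_const v)]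
    simp
  have hsymm := hca.isSymmSndFDerivAt (by simp)
  show fderiv ℝ (pd b g) x (Pi.single a 1) = fderiv ℝ (pd a g) x (Pi.single b 1)
  have e1 : pd b g = fun y => fderiv ℝ g y (Pi.single b 1) := rfl
  have e2 : pd a g = fun y => fderiv ℝ g y (Pi.single a 1) := rfl
  rw [e1, e2, key, key]
  exact hsymm (Pi.single a 1) (Pi.single b 1)

lemma lemA {U : Set (Fin 3 → ℝ)} (hU : IsOpen U) {n τ : (Fin 3 → ℝ) → ℝ}
    (hn : ContDiffOn ℝ 2 n U) (hτ : ContDiffOn ℝ 3 τ U)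
    (heik : ∀ x ∈ U, ∑ i : Fin 3, (pd i τ x) ^ 2 = (n x) ^ 2)
    {x : Fin 3 → ℝ} (hx : x ∈ U) (j : Fin 3) :
    ∑ i : Fin 3, pd i τ x * pd j (pd i τ) x = n x * pd j n x := by
  have hnb := hU.mem_nhds hx
  have dτ : ∀ i, DifferentiableAt ℝ (pd i τ) x := fun i =>
    ((pd_contDiffOn hU hτ (m := 2) (by norm_num) i).contDiffAt hnb).differentiableAt (by norm_num)
  have dn : DifferentiableAt ℝ n x := (hn.contDiffAt hnb).differentiableAt (by norm_num)
  have hΦ : HasFDerivAt (fun y => ∑ i : Fin 3, (pd i τ y) ^ 2)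
      (∑ i : Fin 3, (pd i τ x • fderiv ℝ (pd i τ) x + pd i τ x • fderiv ℝ (pd i τ) x)) x := by
    refine HasFDerivAt.fun_sum fun i _ => ?_
    simpa [sq, Pi.mul_def] using ((dτ i).hasFDerivAt).mul ((dτ i).hasFDerivAt)
  have hΨ : HasFDerivAt (fun y => (n y) ^ 2)
      (n x • fderiv ℝ n x + n x • fderiv ℝ n x) x := by
    simpa [sq, Pi.mul_def] using (dn.hasFDerivAt).mul (dn.hasFDerivAt)
  have heq : (fun y => ∑ i : Fin 3, (pd i τ y) ^ 2) =ᶠ[nhds x] fun y => (n y) ^ 2 := by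
    filter_upwards [hnb] with y hy using heik y hy
  have huniq := hΦ.unique (hΨ.congr_of_eventuallyEq heq)
  have happ := congrArg (fun L : (Fin 3 → ℝ) →L[ℝ] ℝ => L (Pi.single j 1)) huniq
  simp only [ContinuousLinearMap.sum_apply, ContinuousLinearMap.add_apply,
    ContinuousLinearMap.smul_apply, smul_eq_mul] at happ
  have h2 : ∑ i : Fin 3, (pd i τ x * pd j (pd i τ) x + pd i τ x * pd j (pd i τ) x)
      = n x * pd j n x + n x * pd j n x := happ
  rw [Finset.sum_add_distrib] at h2
  linarith

lemma lemB {U : Set (Fin 3 → ℝ)} (hU : IsOpen U) {n τ : (Fin 3 → ℝ) → ℝ}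
    (hn : ContDiffOn ℝ 2 n U) (hτ : ContDiffOn ℝ 3 τ U)
    (heik : ∀ x ∈ U, ∑ i : Fin 3, (pd i τ x) ^ 2 = (n x) ^ 2)
    {x : Fin 3 → ℝ} (hx : x ∈ U) (j : Fin 3) :
    ∑ i : Fin 3, ((pd j (pd i τ) x) ^ 2 + pd i τ x * pd j (pd j (pd i τ)) x)
      = (pd j n x) ^ 2 + n x * pd j (pd j n) x := by
  have hnb := hU.mem_nhds hx
  have cτ1 : ∀ i, ContDiffOn ℝ 2 (pd i τ) U := fun i => pd_contDiffOn hU hτ (m := 2) (by norm_num) i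
  have dτ : ∀ i, DifferentiableAt ℝ (pd i τ) x := fun i =>
    ((cτ1 i).contDiffAt hnb).differentiableAt (by norm_num)
  have dτ2 : ∀ i, DifferentiableAt ℝ (pd j (pd i τ)) x := fun i =>
    ((pd_contDiffOn hU (cτ1 i) (m := 1) (by norm_num) j).contDiffAt hnb).differentiableAt
      (by norm_num)
  have dn : DifferentiableAt ℝ n x := (hn.contDiffAt hnb).differentiableAt (by norm_num)
  have dn2 : DifferentiableAt ℝ (pd j n) x :=
    ((pd_contDiffOn hU hn (m := 1) (by norm_num) j).contDiffAt hnb).differentiableAt (by norm_num)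
  have hF : HasFDerivAt (fun y => ∑ i : Fin 3, pd i τ y * pd j (pd i τ) y)
      (∑ i : Fin 3, (pd i τ x • fderiv ℝ (pd j (pd i τ)) x
        + pd j (pd i τ) x • fderiv ℝ (pd i τ) x)) x :=
    HasFDerivAt.fun_sum fun i _ => ((dτ i).hasFDerivAt).mul ((dτ2 i).hasFDerivAt)
  have hG : HasFDerivAt (fun y => n y * pd j n y)
      (n x • fderiv ℝ (pd j n) x + pd j n x • fderiv ℝ n x) x :=
    (dn.hasFDerivAt).mul (dn2.hasFDerivAt)
  have heq : (fun y => ∑ i : Fin 3, pd i τ y * pd j (pd i τ) y)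
      =ᶠ[nhds x] fun y => n y * pd j n y := by
    filter_upwards [hnb] with y hy using lemA hU hn hτ heik hy j
  have huniq := hF.unique (hG.congr_of_eventuallyEq heq)
  have happ := congrArg (fun L : (Fin 3 → ℝ) →L[ℝ] ℝ => L (Pi.single j 1)) huniq
  simp only [ContinuousLinearMap.sum_apply, ContinuousLinearMap.add_apply,
    ContinuousLinearMap.smul_apply, smul_eq_mul] at happ
  have h2 : ∑ i : Fin 3, (pd i τ x * pd j (pd j (pd i τ)) x
        + pd j (pd i τ) x * pd j (pd i τ) x)
      = n x * pd j (pd j n) x + pd j n x * pd j n x := happ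
  simp only [sq]
  rw [Finset.sum_add_distrib] at h2 ⊢
  linarith

lemma lemC {U : Set (Fin 3 → ℝ)} (hU : IsOpen U) {τ : (Fin 3 → ℝ) → ℝ}
    (hτ : ContDiffOn ℝ 3 τ U) {x : Fin 3 → ℝ} (hx : x ∈ U) (i j : Fin 3) :
    pd j (pd j (pd i τ)) x = pd i (pd j (pd j τ)) x := by
  have hτ2 : ContDiffOn ℝ 2 τ U := hτ.of_le (by norm_num)
  have cτ1 : ContDiffOn ℝ 2 (pd j τ) U := pd_contDiffOn hU hτ (m := 2) (by norm_num) j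
  have step1 : pd j (pd j (pd i τ)) x = pd j (pd i (pd j τ)) x := by
    have heq : pd j (pd i τ) =ᶠ[nhds x] pd i (pd j τ) := by
      filter_upwards [hU.mem_nhds hx] with y hy
      exact pd_symm hU hτ2 hy j i
    show fderiv ℝ (pd j (pd i τ)) x (Pi.single j 1)
      = fderiv ℝ (pd i (pd j τ)) x (Pi.single j 1)
    rw [heq.fderiv_eq]
  rw [step1]
  exact pd_symm hU cτ1 hx j i

theorem stmt1
    (U : Set (Fin 3 → ℝ)) (hU : IsOpen U)
    (n : (Fin 3 → ℝ) → ℝ) (hn : ContDiffOn ℝ 2 n U)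
    (hnpos : ∀ x ∈ U, 0 < n x)
    (τ : (Fin 3 → ℝ) → ℝ) (hτ : ContDiffOn ℝ 3 τ U)
    (heik : ∀ x ∈ U, ∑ i : Fin 3, (pd i τ x) ^ 2 = (n x) ^ 2)
    (I : Set ℝ) (γ : ℝ → (Fin 3 → ℝ))
    (hγU : ∀ s ∈ I, γ s ∈ U)
    (hgeo : ∀ s ∈ I, HasDerivAt γ (fun i => pd i τ (γ s) / (n (γ s)) ^ 2) s) :
    ∀ s ∈ I,
      HasDerivAt (fun u => lap τ (γ u))
        ((n (γ s) ^ 2)⁻¹ * (∑ i : Fin 3, (pd i n (γ s)) ^ 2)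
          + (n (γ s))⁻¹ * lap n (γ s)
          - (n (γ s) ^ 2)⁻¹ * ∑ i : Fin 3, ∑ j : Fin 3, (pd i (pd j τ) (γ s)) ^ 2) s := by
  intro s hs
  have hx : γ s ∈ U := hγU s hs
  have hnb := hU.mem_nhds hx
  have hn0 : n (γ s) ≠ 0 := ne_of_gt (hnpos _ hx)
  have cτ1 : ∀ i, ContDiffOn ℝ 2 (pd i τ) U := fun i =>
    pd_contDiffOn hU hτ (m := 2) (by norm_num) i
  have d3 : ∀ k : Fin 3, DifferentiableAt ℝ (pd k (pd k τ)) (γ s) := fun k =>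
    ((pd_contDiffOn hU (cτ1 k) (m := 1) (by norm_num) k).contDiffAt hnb).differentiableAt
      (by norm_num)
  have hlap : HasFDerivAt (lap τ) (∑ k : Fin 3, fderiv ℝ (pd k (pd k τ)) (γ s)) (γ s) := by
    have e : lap τ = fun y => ∑ k : Fin 3, pd k (pd k τ) y := rfl
    rw [e]
    exact HasFDerivAt.fun_sum fun k _ => (d3 k).hasFDerivAt
  have hcomp := hlap.comp_hasDerivAt s (hgeo s hs)
  have hval : (∑ k : Fin 3, fderiv ℝ (pd k (pd k τ)) (γ s))
        (fun i => pd i τ (γ s) / n (γ s) ^ 2)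
      = (n (γ s) ^ 2)⁻¹ * (∑ i : Fin 3, (pd i n (γ s)) ^ 2)
        + (n (γ s))⁻¹ * lap n (γ s)
        - (n (γ s) ^ 2)⁻¹ * ∑ i : Fin 3, ∑ j : Fin 3, (pd i (pd j τ) (γ s)) ^ 2 := by
    have e1 : (∑ k : Fin 3, fderiv ℝ (pd k (pd k τ)) (γ s))
          (fun i => pd i τ (γ s) / n (γ s) ^ 2)
        = ∑ k : Fin 3, ∑ a : Fin 3,
            pd a τ (γ s) / n (γ s) ^ 2 * pd k (pd k (pd a τ)) (γ s) := by
      rw [ContinuousLinearMap.sum_apply]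
      refine Finset.sum_congr rfl fun k _ => ?_
      rw [clm_apply_eq_sum]
      refine Finset.sum_congr rfl fun a _ => ?_
      rw [show (fderiv ℝ (pd k (pd k τ)) (γ s)) (Pi.single a 1)
          = pd a (pd k (pd k τ)) (γ s) from rfl, (lemC hU hτ hx a k).symm]
    have hP : ∑ k : Fin 3, ∑ a : Fin 3,
          pd a τ (γ s) / n (γ s) ^ 2 * pd k (pd k (pd a τ)) (γ s)
        = (n (γ s) ^ 2)⁻¹ * ∑ k : Fin 3, ∑ a : Fin 3,
            pd a τ (γ s) * pd k (pd k (pd a τ)) (γ s) := by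
      rw [Finset.mul_sum]
      refine Finset.sum_congr rfl fun k _ => ?_
      rw [Finset.mul_sum]
      refine Finset.sum_congr rfl fun a _ => ?_
      ring
    have hBs : ∑ j : Fin 3, ∑ i : Fin 3,
          ((pd j (pd i τ) (γ s)) ^ 2 + pd i τ (γ s) * pd j (pd j (pd i τ)) (γ s))
        = ∑ j : Fin 3, ((pd j n (γ s)) ^ 2 + n (γ s) * pd j (pd j n) (γ s)) :=
      Finset.sum_congr rfl fun j _ => lemB hU hn hτ heik hx j
    have hlapn : ∑ j : Fin 3, n (γ s) * pd j (pd j n) (γ s) = n (γ s) * lap n (γ s) := by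
      rw [show lap n (γ s) = ∑ j : Fin 3, pd j (pd j n) (γ s) from rfl, Finset.mul_sum]
    simp only [Finset.sum_add_distrib] at hBs
    rw [hlapn] at hBs
    have hPP : ∑ k : Fin 3, ∑ a : Fin 3, pd a τ (γ s) * pd k (pd k (pd a τ)) (γ s)
        = ∑ j : Fin 3, (pd j n (γ s)) ^ 2 + n (γ s) * lap n (γ s)
          - ∑ i : Fin 3, ∑ j : Fin 3, (pd i (pd j τ) (γ s)) ^ 2 := by linarith
    rw [e1, hP, hPP]
    field_simp
  have := hcomp
  rw [hval] at this
  exact this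
end

section
/- Let U ⊆ ℝ³ be open, let τ, A : U → ℝ be C² with A(x) > 0 on U, let P̂ : U × ℝ → ℝ be C² with P̂(x,0) = 0 for all x ∈ U, and set P(x,t) = t·(A(x) + P̂(x,t)). Assume that ΔP(x,t) − 2∇_x(∂_tP)(x,t)·∇τ(x) − ∂_tP(x,t)·Δτ(x) = 0 for all (x,t) ∈ U × ℝ. Then Δτ(x) + 2·(∇A(x)/A(x))·∇τ(x) = 0 for every x ∈ U, i.e. Δτ + 2∇(ln A)·∇τ = 0 on U. (The derivation of the second equation of system (3.40).) -/
/- STATEMENT 11 (derivation of the second equation of system (3.40)):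
   if P(x,t) = t(A(x) + P̂(x,t)) with P̂(x,0) = 0 satisfies
   ΔP - 2∇_x(∂_tP)·∇τ - ∂_tP·Δτ = 0, then Δτ + 2(∇A/A)·∇τ = 0. -/

open Real Set

lemma pd_const (i : Fin 3) (c : ℝ) (x : Fin 3 → ℝ) : pd i (fun _ => c) x = 0 := by
  simp [pd]

lemma pd_congr_nhds (i : Fin 3) {f g : (Fin 3 → ℝ) → ℝ} {x : Fin 3 → ℝ}
    (h : f =ᶠ[nhds x] g) : pd i f x = pd i g x := by
  rw [pd, pd, h.fderiv_eq]

theorem stmt11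
    (U : Set (Fin 3 → ℝ)) (hU : IsOpen U)
    (τ A : (Fin 3 → ℝ) → ℝ)
    (hτ : ContDiffOn ℝ 2 τ U) (hA : ContDiffOn ℝ 2 A U)
    (hApos : ∀ x ∈ U, 0 < A x)
    (Ph : (Fin 3 → ℝ) → ℝ → ℝ)
    (hPh : ContDiffOn ℝ 2 (fun q : (Fin 3 → ℝ) × ℝ => Ph q.1 q.2)
      (U ×ˢ (Set.univ : Set ℝ)))
    (hPh0 : ∀ x ∈ U, Ph x 0 = 0)
    (hpde : ∀ x ∈ U, ∀ t : ℝ,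
      lap (fun y => t * (A y + Ph y t)) x
        - 2 * ∑ i : Fin 3,
            pd i (fun y => deriv (fun s => s * (A y + Ph y s)) t) x * pd i τ x
        - deriv (fun s => s * (A x + Ph x s)) t * lap τ x = 0) :
    ∀ x ∈ U, lap τ x + 2 * ∑ i : Fin 3, (pd i A x / A x) * pd i τ x = 0 := by
  intro x hx
  have hUopen : IsOpen (U ×ˢ (Set.univ : Set ℝ)) := hU.prod isOpen_univ
  -- the derivative in t at 0 equals A y, for y ∈ U
  have hderiv : ∀ y ∈ U, deriv (fun s => s * (A y + Ph y s)) 0 = A y := by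
    intro y hy
    have hmem : (y, (0:ℝ)) ∈ U ×ˢ (Set.univ : Set ℝ) := ⟨hy, trivial⟩
    have hPhd : DifferentiableAt ℝ (fun s : ℝ => Ph y s) 0 := by
      have h1 : DifferentiableAt ℝ (fun q : (Fin 3 → ℝ) × ℝ => Ph q.1 q.2) (y, 0) :=
        ((hPh.contDiffAt (hUopen.mem_nhds hmem)).differentiableAt (by norm_num))
      have h2 : DifferentiableAt ℝ (fun s : ℝ => ((y, s) : (Fin 3 → ℝ) × ℝ)) 0 :=
        (differentiableAt_const _).prodMk differentiableAt_id
      exact h1.comp 0 h2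
    have hd := (hasDerivAt_id (0:ℝ)).mul ((hasDerivAt_const (0:ℝ) (A y)).add hPhd.hasDerivAt)
    simp only [id] at hd
    rw [(show HasDerivAt (fun s => s * (A y + Ph y s)) (1 * (A y + Ph y 0) + 0 * (0 + deriv (fun s => Ph y s) 0)) 0 from hd).deriv, hPh0 y hy]
    ring
  have heq := hpde x hx 0
  -- first term is the laplacian of the zero function
  have hzero : (fun y => (0:ℝ) * (A y + Ph y 0)) = fun _ => (0:ℝ) := by
    funext y; ring
  have hpdz : (pd · (fun _ => (0:ℝ))) = fun _ _ => (0:ℝ) := by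
    funext i y; exact pd_const i 0 y
  have hlap0 : lap (fun y => (0:ℝ) * (A y + Ph y 0)) x = 0 := by
    rw [hzero, lap]
    have : ∀ i : Fin 3, pd i (pd i fun _ => (0:ℝ)) x = 0 := by
      intro i
      have h : (pd i fun _ => (0:ℝ)) = fun _ => (0:ℝ) := funext fun y => pd_const i 0 y
      rw [h, pd_const]
    simp [this]
  -- second-term coefficients
  have hpdA : ∀ i : Fin 3,
      pd i (fun y => deriv (fun s => s * (A y + Ph y s)) 0) x = pd i A x := by
    intro i
    apply pd_congr_nhds
    filter_upwards [hU.mem_nhds hx] with y hy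
    exact hderiv y hy
  rw [hlap0, hderiv x hx] at heq
  simp only [hpdA] at heq
  have hAne : A x ≠ 0 := ne_of_gt (hApos x hx)
  have hsum : ∑ i : Fin 3, (pd i A x / A x) * pd i τ x
      = (∑ i : Fin 3, pd i A x * pd i τ x) / A x := by
    rw [Finset.sum_div]
    exact Finset.sum_congr rfl fun i _ => by ring
  rw [hsum]
  field_simp
  linarith
end
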